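/- Let T be a locally finite tree without ends, and let c be a function assigning to each oriented edge e of T a value in a K-vector space, satisfying c(e) = −c(ē) for the reversed edge and Σ_{e ↦ v} c(e) = 0 for every vertex v (sum over oriented edges with target v). Then the finitely additive set function μ_c on the compact opens of ∂T determined by μ_c(U(e)) = c(e) is well-defined, and μ_c(∂T) = 0. -/

import Mathlib

open SimpleGraph

variable {V : Type*}

/-- A geodesic ray in the graph `G` starting at the vertex `x`. -/
structure TreeRay (G : SimpleGraph V) (x : V) where
  toFun : ℕ → V
  init : toFun 0 = x
  adj : ∀ n, G.Adj (toFun n) (toFun (n + 1))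
  isGeodesic : ∀ n, G.dist x (toFun n) = n

/-- Two rays (possibly with different base points) represent the same boundary
point if they eventually coincide (up to a shift of parameter). -/
def RayEquiv {G : SimpleGraph V} {x y : V} (r : TreeRay G x) (s : TreeRay G y) : Prop :=
  ∃ a b : ℕ, ∀ n, r.toFun (n + a) = s.toFun (n + b)

/-- The length of the common initial segment of two geodesic rays from the same
base point. -/
noncomputable def rayOverlap {G : SimpleGraph V} {x : V} (r s : TreeRay G x) : ℕ :=
  sSup {n | r.toFun n = s.toFun n}

/-- The visual metric `ρ_{x}` on the boundary of a tree:
`ρ_x(ξ,η) = e^{−L}` where `L` is the length of `[x,ξ] ∩ [x,η]`, and `ρ_x(ξ,ξ) = 0`. -/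
noncomputable def rho {G : SimpleGraph V} {x : V} (r s : TreeRay G x) : ℝ :=
  letI := Classical.decEq (TreeRay G x)
  if r = s then 0 else Real.exp (-(rayOverlap r s : ℝ))

/-- The cross-ratio of four boundary points with respect to the base point `x`. -/
noncomputable def crossRatio {G : SimpleGraph V} {x : V} (ξ₁ ξ₂ ξ₃ ξ₄ : TreeRay G x) : ℝ :=
  (rho ξ₃ ξ₁ * rho ξ₄ ξ₂) / (rho ξ₃ ξ₂ * rho ξ₄ ξ₁)

/-- A locally finite tree is *without ends* if every vertex has valency at least two
(equivalently, the complement of every vertex is disconnected). -/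
def NoEnds (G : SimpleGraph V) [G.LocallyFinite] : Prop :=
  ∀ v : V, 2 ≤ G.degree v

/-- `U(e) ⊆ ∂T` for the oriented edge `e` from `x` to `y`: the boundary points with a
representative ray eventually contained in the basic set `A(e)`. -/
def Ue (G : SimpleGraph V) (x₀ : V) (x y : V) : Set (TreeRay G x₀) :=
  {ξ | ∃ N : ℕ, ∀ n ≥ N, G.dist (ξ.toFun n) y < G.dist (ξ.toFun n) x}

section HCProof
variable {G : SimpleGraph V} {x₀ : V}


/-- On a walk of minimal length, the `n`-th vertex is at distance `n` from the start
and `length - n` from the end. -/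
lemma hc_geo_getVert (hc : G.Connected) :
    ∀ {u v : V} (p : G.Walk u v), p.length = G.dist u v → ∀ n, n ≤ p.length →
      G.dist u (p.getVert n) = n ∧ G.dist (p.getVert n) v = p.length - n := by
  intro u v p
  induction p with
  | nil =>
    intro _ n hn
    simp only [SimpleGraph.Walk.length_nil, Nat.le_zero] at hn
    subst hn
    simp [SimpleGraph.dist_self]
  | @cons u u' v h q ih =>
    intro hp n hn
    rw [SimpleGraph.Walk.length_cons] at hp hn
    have hd1 : G.dist u' v ≤ q.length := SimpleGraph.dist_le q
    have hd2 : G.dist u v ≤ G.dist u u' + G.dist u' v := hc.dist_triangle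
    have huu' : G.dist u u' = 1 := SimpleGraph.dist_eq_one_iff_adj.mpr h
    have hq : q.length = G.dist u' v := by omega
    cases n with
    | zero =>
      refine ⟨by simp [SimpleGraph.dist_self], ?_⟩
      simpa using hp.symm
    | succ n =>
      have hn' : n ≤ q.length := by omega
      obtain ⟨h1, h2⟩ := ih hq n hn'
      rw [SimpleGraph.Walk.getVert_cons_succ]
      simp only [SimpleGraph.Walk.length_cons]
      have hle : G.dist u (q.getVert n) ≤ 1 + n := by
        calc G.dist u (q.getVert n) ≤ G.dist u u' + G.dist u' (q.getVert n) := hc.dist_triangle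
        _ = 1 + n := by rw [huu', h1]
      have hge : G.dist u v ≤ G.dist u (q.getVert n) + G.dist (q.getVert n) v := hc.dist_triangle
      constructor
      · omega
      · omega

/-- A vertex on a geodesic splits the distance. -/
lemma hc_geo_support (hc : G.Connected) {u v t : V} (p : G.Walk u v)
    (hp : p.length = G.dist u v) (ht : t ∈ p.support) :
    G.dist u t + G.dist t v = G.dist u v := by
  obtain ⟨n, hget, hn⟩ := SimpleGraph.Walk.mem_support_iff_exists_getVert.mp ht
  obtain ⟨h1, h2⟩ := hc_geo_getVert hc p hp n hn
  rw [← hget, h1, h2]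
  omega

/-- In a tree, every path realizes the distance. -/
lemma hc_path_dist (hT : G.IsTree) {u v : V} (p : G.Walk u v) (hp : p.IsPath) :
    p.length = G.dist u v := by
  obtain ⟨q, hq, hql⟩ := hT.isConnected.exists_path_of_dist u v
  have := hT.existsUnique_path u v
  obtain ⟨r, _, hr⟩ := this
  have h1 : p = r := hr p hp
  have h2 : q = r := hr q hq
  rw [h1, ← h2, hql]

/-- Appending an edge to a new vertex preserves being a path. -/
lemma hc_isPath_concat {u v w : V} {p : G.Walk u v} (hp : p.IsPath) (h : G.Adj v w)
    (hw : w ∉ p.support) : (p.concat h).IsPath := by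
  rw [SimpleGraph.Walk.isPath_def, SimpleGraph.Walk.support_concat]
  simp [List.nodup_append, hp.support_nodup, hw]
  exact fun a ha h => hw (h ▸ ha)

/-- Adjacent vertices have distances to any vertex differing by exactly one (in a tree). -/
lemma hc_adj_dist (hT : G.IsTree) {x y : V} (hxy : G.Adj x y) (v : V) :
    G.dist v x = G.dist v y + 1 ∨ G.dist v y = G.dist v x + 1 := by
  obtain ⟨p, hp, hpl⟩ := hT.isConnected.exists_path_of_dist v x
  by_cases hy : y ∈ p.support
  · left
    have := hc_geo_support hT.isConnected p hpl hy
    have hyx : G.dist y x = 1 := SimpleGraph.dist_eq_one_iff_adj.mpr hxy.symm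
    omega
  · right
    have hq : (p.concat hxy).IsPath := hc_isPath_concat hp hxy hy
    have := hc_path_dist hT _ hq
    rw [SimpleGraph.Walk.length_concat, hpl] at this
    omega

/-- In a tree, the neighbour on the way towards another vertex is unique. -/
lemma hc_parent_unique (hT : G.IsTree) {a v w₁ w₂ : V} {n : ℕ}
    (hv : G.dist a v = n + 1) (h1 : G.Adj w₁ v) (h2 : G.Adj w₂ v)
    (d1 : G.dist a w₁ = n) (d2 : G.dist a w₂ = n) : w₁ = w₂ := by
  obtain ⟨p₁, hp₁⟩ := hT.isConnected.exists_walk_length_eq_dist a w₁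
  obtain ⟨p₂, hp₂⟩ := hT.isConnected.exists_walk_length_eq_dist a w₂
  have hW₁ : (p₁.concat h1).IsPath := by
    apply SimpleGraph.Walk.isPath_of_length_eq_dist
    rw [SimpleGraph.Walk.length_concat, hp₁, d1, hv]
  have hW₂ : (p₂.concat h2).IsPath := by
    apply SimpleGraph.Walk.isPath_of_length_eq_dist
    rw [SimpleGraph.Walk.length_concat, hp₂, d2, hv]
  obtain ⟨r, _, hr⟩ := hT.existsUnique_path a v
  have heq : p₁.concat h1 = p₂.concat h2 := by rw [hr _ hW₁, hr _ hW₂]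
  have h1' : (p₁.concat h1).reverse.getVert 1 = w₁ := by
    rw [SimpleGraph.Walk.reverse_concat]
    simp
  have h2' : (p₂.concat h2).reverse.getVert 1 = w₂ := by
    rw [SimpleGraph.Walk.reverse_concat]
    simp
  rw [← h1', ← h2', heq]


/-- An edge crossing the cut of the edge `xy` is `xy` itself. -/
lemma hc_crossing_eq (hT : G.IsTree) {x y v w : V} (hxy : G.Adj x y) (hvw : G.Adj v w)
    (hv : G.dist v y < G.dist v x) (hw : G.dist w x < G.dist w y) : v = y ∧ w = x := by
  have h1 := hc_adj_dist hT hxy v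
  have h2 := hc_adj_dist hT hxy w
  have h3 := hc_adj_dist hT hvw x
  rw [SimpleGraph.dist_comm (u := x) (v := v), SimpleGraph.dist_comm (u := x) (v := w)] at h3
  have h4 := hc_adj_dist hT hvw y
  rw [SimpleGraph.dist_comm (u := y) (v := v), SimpleGraph.dist_comm (u := y) (v := w)] at h4
  have key : G.dist w x + 1 = G.dist v x ∧ G.dist v y + 1 = G.dist v x ∧
      G.dist w y = G.dist v x := by
    rcases h1 with e1 | e1 <;> rcases h2 with e2 | e2 <;> rcases h3 with e3 | e3 <;>
      rcases h4 with e4 | e4 <;> omega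
  obtain ⟨Q, hQ⟩ := hT.isConnected.exists_walk_length_eq_dist w x
  obtain ⟨P, hP⟩ := hT.isConnected.exists_walk_length_eq_dist v y
  have hW1 : (SimpleGraph.Walk.cons hvw Q).IsPath := by
    apply SimpleGraph.Walk.isPath_of_length_eq_dist
    rw [SimpleGraph.Walk.length_cons]
    omega
  have hW2 : (P.concat hxy.symm).IsPath := by
    apply SimpleGraph.Walk.isPath_of_length_eq_dist
    rw [SimpleGraph.Walk.length_concat]
    omega
  obtain ⟨r, _, hr⟩ := hT.existsUnique_path v x
  have heq : SimpleGraph.Walk.cons hvw Q = P.concat hxy.symm := by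
    rw [hr _ hW1, hr _ hW2]
  have hy2 : y ∈ (P.concat hxy.symm).support := by
    rw [SimpleGraph.Walk.support_concat]
    exact List.mem_append_left _ (SimpleGraph.Walk.end_mem_support P)
  rw [← heq, SimpleGraph.Walk.support_cons] at hy2
  rcases List.mem_cons.mp hy2 with hyv | hyQ
  · -- y = v
    have hvy0 : G.dist v y = 0 := by rw [← hyv]; exact SimpleGraph.dist_self
    have hwx0 : G.dist w x = 0 := by omega
    exact ⟨hyv.symm, (hT.isConnected.dist_eq_zero_iff.mp hwx0)⟩
  · exfalso
    have := hc_geo_support hT.isConnected Q hQ hyQ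
    have hyx : G.dist y x = 1 := SimpleGraph.dist_eq_one_iff_adj.mpr hxy.symm
    omega

/-- Along a walk from the `x`-side to the `y`-side there is a crossing of the edge `xy`. -/
lemma hc_walk_crossing (hT : G.IsTree) {x y : V} (hxy : G.Adj x y) :
    ∀ {a b : V} (p : G.Walk a b), G.dist a x < G.dist a y → G.dist b y < G.dist b x →
      ∃ i < p.length, p.getVert i = x ∧ p.getVert (i + 1) = y := by
  intro a b p
  induction p with
  | nil => intro h1 h2; omega
  | @cons a a' b h q ih =>
    intro h1 h2
    by_cases ha' : G.dist a' y < G.dist a' x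
    · obtain ⟨hy', hx'⟩ := hc_crossing_eq hT hxy h.symm ha' h1
      refine ⟨0, by simp [SimpleGraph.Walk.length_cons], by simpa using hx', ?_⟩
      simpa [SimpleGraph.Walk.getVert_cons_succ] using hy'
    · have ha'' : G.dist a' x < G.dist a' y := by
        have := hc_adj_dist hT hxy a'
        omega
      obtain ⟨i, hi, hgx, hgy⟩ := ih ha'' h2
      refine ⟨i + 1, by rw [SimpleGraph.Walk.length_cons]; omega, ?_, ?_⟩
      · rwa [SimpleGraph.Walk.getVert_cons_succ]
      · rwa [SimpleGraph.Walk.getVert_cons_succ]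

/-- Distance formula across the edge `xy`. -/
lemma hc_dist_cross (hT : G.IsTree) {x y a b : V} (hxy : G.Adj x y)
    (ha : G.dist a y < G.dist a x) (hb : G.dist b x < G.dist b y) :
    G.dist a b = G.dist a y + 1 + G.dist x b := by
  obtain ⟨p, hp⟩ := hT.isConnected.exists_walk_length_eq_dist a b
  obtain ⟨i, hi, hgy, hgx⟩ := hc_walk_crossing hT hxy.symm p ha hb
  have h1 := (hc_geo_getVert hT.isConnected p hp i (by omega)).1
  have h2 := (hc_geo_getVert hT.isConnected p hp (i + 1) (by omega)).2
  rw [hgy] at h1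
  rw [hgx] at h2
  omega

/-- On a path between two vertices on the `y`-side of `xy`, all vertices are on the `y`-side. -/
lemma hc_path_side (hT : G.IsTree) {x y a b : V} (hxy : G.Adj x y) (p : G.Walk a b)
    (hp : p.IsPath) (ha : G.dist a y < G.dist a x) (hb : G.dist b y < G.dist b x) :
    ∀ t ∈ p.support, G.dist t y < G.dist t x := by
  classical
  intro t ht
  by_contra hcon
  have ht' : G.dist t x < G.dist t y := by
    have := hc_adj_dist hT hxy t
    omega
  obtain ⟨i, hi, hgy, hgx⟩ := hc_walk_crossing hT hxy.symm (p.takeUntil t ht) ha ht'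
  have hy1 : y ∈ (p.takeUntil t ht).support := by
    rw [SimpleGraph.Walk.mem_support_iff_exists_getVert]
    exact ⟨i, hgy, by omega⟩
  obtain ⟨j, hj, hgx2, hgy2⟩ := hc_walk_crossing hT hxy (p.dropUntil t ht) ht' hb
  have hy2 : y ∈ (p.dropUntil t ht).support := by
    rw [SimpleGraph.Walk.mem_support_iff_exists_getVert]
    exact ⟨j + 1, hgy2, by omega⟩
  have hyt : y ≠ t := by
    intro h
    rw [← h, SimpleGraph.dist_self] at ht'
    omega
  have hy2' : y ∈ (p.dropUntil t ht).support.tail := by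
    have hcons := SimpleGraph.Walk.support_eq_cons (p.dropUntil t ht)
    rw [hcons] at hy2
    rcases List.mem_cons.mp hy2 with h | h
    · exact absurd h hyt
    · exact h
  have hnd := hp.support_nodup
  conv at hnd => rw [← SimpleGraph.Walk.take_spec p ht]
  rw [SimpleGraph.Walk.support_append] at hnd
  exact (List.disjoint_of_nodup_append hnd) hy1 hy2'

lemma hc_TreeRay_ext {ξ η : TreeRay G x₀} (h : ξ.toFun = η.toFun) : ξ = η := by
  cases ξ; cases η; simpa using h

/-- Crossing along a ray: from the `x`-side to the `y`-side the ray uses the edge `xy`. -/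
lemma hc_ray_crossing (hT : G.IsTree) {x y : V} (hxy : G.Adj x y) (ξ : TreeRay G x₀) :
    ∀ nn a, a ≤ nn → G.dist (ξ.toFun a) x < G.dist (ξ.toFun a) y →
      G.dist (ξ.toFun nn) y < G.dist (ξ.toFun nn) x →
      ∃ j, a ≤ j ∧ j < nn ∧ ξ.toFun j = x ∧ ξ.toFun (j + 1) = y := by
  intro nn
  induction nn with
  | zero =>
    intro a ha h1 h2
    interval_cases a
    omega
  | succ nn ih =>
    intro a ha h1 h2
    rcases Nat.lt_or_ge a (nn + 1) with ha' | ha'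
    · by_cases hside : G.dist (ξ.toFun nn) y < G.dist (ξ.toFun nn) x
      · obtain ⟨j, hj1, hj2, hj3⟩ := ih a (by omega) h1 hside
        exact ⟨j, hj1, by omega, hj3⟩
      · have hx : G.dist (ξ.toFun nn) x < G.dist (ξ.toFun nn) y := by
          have := hc_adj_dist hT hxy (ξ.toFun nn)
          omega
        obtain ⟨hy', hx'⟩ := hc_crossing_eq hT hxy (ξ.adj nn).symm h2 hx
        exact ⟨nn, by omega, by omega, hx', hy'⟩
    · have : a = nn + 1 := by omega
      subst this
      omega

/-- Each ray has a well-defined side of each edge, eventually. -/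
lemma hc_ray_side (hT : G.IsTree) {x y : V} (hxy : G.Adj x y) (ξ : TreeRay G x₀) :
    ξ ∈ Ue G x₀ x y ∨ ξ ∈ Ue G x₀ y x := by
  set N := max (G.dist x₀ x) (G.dist x₀ y) + 1 with hN
  have hne : ∀ n ≥ N, ξ.toFun n ≠ x ∧ ξ.toFun n ≠ y := by
    intro n hn
    constructor
    · intro h
      have := ξ.isGeodesic n
      rw [h] at this
      omega
    · intro h
      have := ξ.isGeodesic n
      rw [h] at this
      omega
  have hconst : ∀ n ≥ N, (G.dist (ξ.toFun n) y < G.dist (ξ.toFun n) x ↔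
      G.dist (ξ.toFun N) y < G.dist (ξ.toFun N) x) := by
    intro n hn
    induction n with
    | zero =>
      have : N = 0 := by omega
      rw [this]
    | succ n ihn =>
      rcases Nat.lt_or_ge n N with h | h
      · have : N = n + 1 := by omega
        rw [this]
      · rw [← ihn h]
        constructor
        · intro h1
          by_contra h2
          have h2' : G.dist (ξ.toFun n) x < G.dist (ξ.toFun n) y := by
            have := hc_adj_dist hT hxy (ξ.toFun n)
            omega
          obtain ⟨hy', hx'⟩ := hc_crossing_eq hT hxy ((ξ.adj n).symm) h1 h2'
          exact (hne n h).1 hx'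
        · intro h1
          by_contra h2
          have h2' : G.dist (ξ.toFun (n + 1)) x < G.dist (ξ.toFun (n + 1)) y := by
            have := hc_adj_dist hT hxy (ξ.toFun (n + 1))
            omega
          obtain ⟨hy', hx'⟩ := hc_crossing_eq hT hxy (ξ.adj n) h1 h2'
          exact (hne n h).2 hy'
  by_cases hside : G.dist (ξ.toFun N) y < G.dist (ξ.toFun N) x
  · left
    exact ⟨N, fun n hn => (hconst n hn).mpr hside⟩
  · right
    refine ⟨N, fun n hn => ?_⟩
    have h1 : G.dist (ξ.toFun n) x < G.dist (ξ.toFun n) y ↔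
        G.dist (ξ.toFun N) x < G.dist (ξ.toFun N) y := by
      constructor
      · intro h
        by_contra h'
        have := hc_adj_dist hT hxy (ξ.toFun N)
        have h'' : G.dist (ξ.toFun N) y < G.dist (ξ.toFun N) x := by omega
        have := (hconst n hn).mpr h''
        omega
      · intro h
        by_contra h'
        have := hc_adj_dist hT hxy (ξ.toFun n)
        have h'' : G.dist (ξ.toFun n) y < G.dist (ξ.toFun n) x := by omega
        have := (hconst n hn).mp h''
        omega
    rw [h1]
    have := hc_adj_dist hT hxy (ξ.toFun N)
    omega

/-- The two sides of an edge are disjoint sets of rays. -/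
lemma hc_Ue_disjoint {x y : V} (ξ : TreeRay G x₀) (h1 : ξ ∈ Ue G x₀ x y)
    (h2 : ξ ∈ Ue G x₀ y x) : False := by
  obtain ⟨N1, hN1⟩ := h1
  obtain ⟨N2, hN2⟩ := h2
  have := hN1 (max N1 N2) (le_max_left _ _)
  have := hN2 (max N1 N2) (le_max_right _ _)
  omega

/-- The divergence point of two distinct rays, and its key property. -/
lemma hc_exists_div (hT : G.IsTree) {ξ η : TreeRay G x₀} (hne : ξ ≠ η) :
    ∃ J, ξ.toFun J = η.toFun J ∧ ∀ x y, G.Adj x y → ξ ∈ Ue G x₀ x y → η ∈ Ue G x₀ x y →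
      G.dist (ξ.toFun J) y < G.dist (ξ.toFun J) x := by
  have hex : ∃ j, ξ.toFun j ≠ η.toFun j := by
    by_contra h
    push_neg at h
    exact hne (hc_TreeRay_ext (funext h))
  classical
  set J₁ := Nat.find hex with hJ₁
  have hJspec : ξ.toFun J₁ ≠ η.toFun J₁ := Nat.find_spec hex
  have hJpos : 0 < J₁ := by
    rcases Nat.eq_zero_or_pos J₁ with h | h
    · exfalso; apply hJspec; rw [h, ξ.init, η.init]
    · exact h
  have hdown : ∀ k, ξ.toFun (k + 1) = η.toFun (k + 1) → ξ.toFun k = η.toFun k := by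
    intro k hk
    refine hc_parent_unique hT (a := x₀) (v := ξ.toFun (k + 1)) (n := k)
      (ξ.isGeodesic (k + 1)) (ξ.adj k) ?_ (ξ.isGeodesic k) (η.isGeodesic k)
    rw [hk]
    exact η.adj k
  have hinit : ∀ k, ξ.toFun k = η.toFun k → ∀ j ≤ k, ξ.toFun j = η.toFun j := by
    intro k
    induction k with
    | zero => intro h j hj; interval_cases j; exact h
    | succ k ihk =>
      intro h j hj
      rcases Nat.lt_or_ge j (k + 1) with h' | h'
      · exact ihk (hdown k h) j (by omega)
      · have : j = k + 1 := by omega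
        rw [this]; exact h
  refine ⟨J₁ - 1, ?_, ?_⟩
  · by_contra h
    exact h (by
      have := Nat.find_min hex (m := J₁ - 1) (by omega)
      push_neg at this
      exact this)
  · intro x y hxy hξ hη
    by_contra hcon
    have hside : G.dist (ξ.toFun (J₁ - 1)) x < G.dist (ξ.toFun (J₁ - 1)) y := by
      have := hc_adj_dist hT hxy (ξ.toFun (J₁ - 1))
      omega
    have hagree : ξ.toFun (J₁ - 1) = η.toFun (J₁ - 1) := by
      have := Nat.find_min hex (m := J₁ - 1) (by omega)
      push_neg at this
      exact this
    obtain ⟨N1, hN1⟩ := hξ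
    obtain ⟨N2, hN2⟩ := hη
    set nn := max (max N1 N2) J₁ with hnn
    obtain ⟨j₁, hj₁a, hj₁b, hj₁x, hj₁y⟩ := hc_ray_crossing hT hxy ξ nn (J₁ - 1)
      (by omega) hside (hN1 nn (by omega))
    have hside' : G.dist (η.toFun (J₁ - 1)) x < G.dist (η.toFun (J₁ - 1)) y := by
      rw [← hagree]; exact hside
    obtain ⟨j₂, hj₂a, hj₂b, hj₂x, hj₂y⟩ := hc_ray_crossing hT hxy η nn (J₁ - 1)
      (by omega) hside' (hN2 nn (by omega))
    have hj12 : j₁ = j₂ := by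
      have e1 := ξ.isGeodesic j₁
      have e2 := η.isGeodesic j₂
      rw [hj₁x] at e1
      rw [hj₂x] at e2
      omega
    have : ξ.toFun (j₁ + 1) = η.toFun (j₁ + 1) := by
      rw [hj₁y, hj12, hj₂y]
    have := hinit (j₁ + 1) this J₁ (by omega)
    exact hJspec this

/-- Every edge has a ray (from `x₀`) eventually on its far side. -/
lemma hc_Ue_nonempty (hT : G.IsTree) [G.LocallyFinite] (hends : NoEnds G)
    {x y : V} (hxy : G.Adj x y) : ∃ ξ : TreeRay G x₀, ξ ∈ Ue G x₀ x y := by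
  classical
  -- a choice of neighbour different from a given vertex
  have hnbr : ∀ u v : V, ∃ w, G.Adj v w ∧ w ≠ u := by
    intro u v
    obtain ⟨w, hw, hwu⟩ := Finset.exists_mem_ne
      (s := G.neighborFinset v) (by have := hends v; rw [← G.card_neighborFinset_eq_degree] at this; omega) u
    exact ⟨w, (G.mem_neighborFinset v w).mp hw, hwu⟩
  choose f hf1 hf2 using hnbr
  -- the forward path from y avoiding backtracking, with previous-vertex bookkeeping
  let g : ℕ → V × V := fun n => Nat.rec (x, y) (fun _ pr => (pr.2, f pr.1 pr.2)) n
  let ρ : ℕ → V := fun n => (g n).2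
  have hg0 : g 0 = (x, y) := rfl
  have hgs : ∀ n, g (n + 1) = ((g n).2, f (g n).1 (g n).2) := fun n => rfl
  have hρadj : ∀ n, G.Adj (ρ n) (ρ (n + 1)) := by
    intro n
    show G.Adj (g n).2 (g (n + 1)).2
    rw [hgs n]
    exact hf1 (g n).1 (g n).2
  have hρne : ∀ n, ρ (n + 1) ≠ (g n).1 := by
    intro n
    show (g (n + 1)).2 ≠ (g n).1
    rw [hgs n]
    exact hf2 (g n).1 (g n).2
  have hprev : ∀ n, (g (n + 1)).1 = ρ n := fun n => by rw [hgs n]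
  -- invariants
  have hinv : ∀ n, G.dist y (ρ n) = n ∧ G.dist x (ρ n) = n + 1 ∧
      G.Adj ((g n).1) (ρ n) ∧ ((g n).1 = x ∧ n = 0 ∨ G.dist y ((g n).1) + 1 = n) := by
    intro n
    induction n with
    | zero =>
      refine ⟨SimpleGraph.dist_self, ?_, ?_, Or.inl ⟨rfl, rfl⟩⟩
      · show G.dist x y = 1
        exact SimpleGraph.dist_eq_one_iff_adj.mpr hxy
      · exact hxy
    | succ n ih =>
      obtain ⟨ih1, ih2, ih3, ih4⟩ := ih
      have hadj := hρadj n
      have hne := hρne n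
      have hcm1 : G.dist (ρ n) y = G.dist y (ρ n) := SimpleGraph.dist_comm
      have hcm2 : G.dist (ρ (n + 1)) y = G.dist y (ρ (n + 1)) := SimpleGraph.dist_comm
      have hcm3 : G.dist (ρ n) x = G.dist x (ρ n) := SimpleGraph.dist_comm
      have hcm4 : G.dist (ρ (n + 1)) x = G.dist x (ρ (n + 1)) := SimpleGraph.dist_comm
      -- dist y (ρ (n+1)) = n + 1
      have hdy : G.dist y (ρ (n + 1)) = n + 1 := by
        have hopt := hc_adj_dist hT hadj y
        rcases hopt with h | h
        · -- going back towards y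
          exfalso
          rcases ih4 with ⟨hx0, hn0⟩ | hprev'
          · omega
          · have : ρ (n + 1) = (g n).1 := by
              refine hc_parent_unique hT (a := y) (v := ρ n) (n := n - 1) ?_ hadj.symm ih3 ?_ ?_
              · omega
              · omega
              · omega
            exact hne this
        · omega
      refine ⟨hdy, ?_, ?_, Or.inr ?_⟩
      · -- dist x (ρ (n+1)) = n + 2
        have hopt := hc_adj_dist hT hxy (ρ (n + 1))
        rcases hopt with h | h
        · omega
        · -- ρ (n+1) would be on the x-side : crossing argument
          exfalso
          have hyx : G.dist (ρ n) y < G.dist (ρ n) x := by omega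
          have hxs : G.dist (ρ (n + 1)) x < G.dist (ρ (n + 1)) y := by omega
          obtain ⟨h1, h2⟩ := hc_crossing_eq hT hxy hadj hyx hxs
          have hn0 : n = 0 := by
            rw [h1] at ih1
            rw [SimpleGraph.dist_self] at ih1
            omega
          subst hn0
          apply hρne 0
          rw [h2]
          rfl
      · rw [hprev n]
        exact hadj
      · rw [hprev n]
        omega
  -- distances from x₀ along ρ change by one at each step
  have hpm : ∀ n, G.dist x₀ (ρ n) = G.dist x₀ (ρ (n + 1)) + 1 ∨
      G.dist x₀ (ρ (n + 1)) = G.dist x₀ (ρ n) + 1 := by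
    intro n
    have := hc_adj_dist hT (hρadj n) x₀
    have hcm1 : G.dist x₀ (ρ n) = G.dist (ρ n) x₀ := SimpleGraph.dist_comm
    have hcm2 : G.dist x₀ (ρ (n + 1)) = G.dist (ρ (n + 1)) x₀ := SimpleGraph.dist_comm
    omega
  -- if the distance to x₀ increases once, it increases forever
  have hext : ∀ n, G.dist x₀ (ρ (n + 1)) = G.dist x₀ (ρ n) + 1 →
      G.dist x₀ (ρ (n + 2)) = G.dist x₀ (ρ (n + 1)) + 1 := by
    intro n hn
    rcases hpm (n + 1) with h | h
    · exfalso
      replace h : G.dist x₀ (ρ (n + 1)) = G.dist x₀ (ρ (n + 2)) + 1 := h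
      have : ρ (n + 2) = ρ n := by
        refine hc_parent_unique hT (a := x₀) (v := ρ (n + 1)) (n := G.dist x₀ (ρ n)) ?_
          (hρadj (n + 1)).symm (hρadj n) ?_ rfl
        · omega
        · omega
      have e1 := (hinv n).1
      have e2 := (hinv (n + 2)).1
      rw [this] at e2
      omega
    · exact h
  -- there is a first increase
  have hfirst : ∃ m, G.dist x₀ (ρ (m + 1)) = G.dist x₀ (ρ m) + 1 := by
    by_contra hcon
    push_neg at hcon
    have hdec : ∀ m, G.dist x₀ (ρ (m + 1)) + 1 = G.dist x₀ (ρ m) := by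
      intro m
      rcases hpm m with h | h
      · omega
      · exact absurd h (hcon m)
    have hsum : ∀ m, G.dist x₀ (ρ m) + m = G.dist x₀ (ρ 0) := by
      intro m
      induction m with
      | zero => rfl
      | succ m ihm =>
        have := hdec m
        omega
    have := hsum (G.dist x₀ (ρ 0) + 1)
    omega
  obtain ⟨m, hm⟩ := hfirst
  have hinc : ∀ k, G.dist x₀ (ρ (m + k + 1)) = G.dist x₀ (ρ (m + k)) + 1 := by
    intro k
    induction k with
    | zero => exact hm
    | succ k ihk =>
      exact hext (m + k) ihk
  have hdval : ∀ k, G.dist x₀ (ρ (m + k)) = G.dist x₀ (ρ m) + k := by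
    intro k
    induction k with
    | zero => rfl
    | succ k ihk =>
      have h2 : G.dist x₀ (ρ (m + (k + 1))) = G.dist x₀ (ρ (m + k)) + 1 := hinc k
      omega
  -- build the ray: geodesic from x₀ to ρ m, then follow ρ
  obtain ⟨P, hP⟩ := hT.isConnected.exists_walk_length_eq_dist x₀ (ρ m)
  set s := G.dist x₀ (ρ m) with hs
  have hPlen : P.length = s := hP
  set F : ℕ → V := fun n => if n < s then P.getVert n else ρ (m + (n - s)) with hF
  have hF_lt : ∀ n, n < s → F n = P.getVert n := by
    intro n hn
    simp only [hF, if_pos hn]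
  have hF_ge : ∀ n, s ≤ n → F n = ρ (m + (n - s)) := by
    intro n hn
    simp only [hF]
    rw [if_neg (by omega)]
  have hFgeo : ∀ n, G.dist x₀ (F n) = n := by
    intro n
    rcases Nat.lt_or_ge n s with hn | hn
    · rw [hF_lt n hn]
      exact (hc_geo_getVert hT.isConnected P hP n (by omega)).1
    · rw [hF_ge n hn, hdval (n - s)]
      omega
  have hFadj : ∀ n, G.Adj (F n) (F (n + 1)) := by
    intro n
    rcases Nat.lt_or_ge (n + 1) s with hn | hn
    · rw [hF_lt n (by omega), hF_lt (n + 1) hn]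
      exact P.adj_getVert_succ (by omega)
    · rcases Nat.lt_or_ge n s with hn' | hn'
      · -- n + 1 = s
        have hns : n + 1 = s := by omega
        rw [hF_lt n hn', hF_ge (n + 1) hn]
        have : m + (n + 1 - s) = m := by omega
        rw [this]
        have hAdj := P.adj_getVert_succ (show n < P.length by omega)
        have hgl : P.getVert (n + 1) = ρ m := by
          rw [show n + 1 = P.length by omega]
          exact SimpleGraph.Walk.getVert_length P
        rw [hgl] at hAdj
        exact hAdj
      · rw [hF_ge n hn', hF_ge (n + 1) (by omega)]
        have : m + (n + 1 - s) = m + (n - s) + 1 := by omega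
        rw [this]
        exact hρadj (m + (n - s))
  have hFinit : F 0 = x₀ := by
    rcases Nat.lt_or_ge 0 s with h | h
    · rw [hF_lt 0 h]
      exact SimpleGraph.Walk.getVert_zero P
    · rw [hF_ge 0 h]
      have hs0 : s = 0 := by omega
      have : G.dist x₀ (ρ m) = 0 := by omega
      have := hT.isConnected.dist_eq_zero_iff.mp this
      rw [show m + (0 - s) = m by omega]
      exact this.symm
  refine ⟨⟨F, hFinit, hFadj, hFgeo⟩, s, fun n hn => ?_⟩
  show G.dist (F n) y < G.dist (F n) x
  rw [hF_ge n hn]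
  have h1 := (hinv (m + (n - s))).1
  have h2 := (hinv (m + (n - s))).2.1
  have hcm1 : G.dist (ρ (m + (n - s))) y = G.dist y (ρ (m + (n - s))) := SimpleGraph.dist_comm
  have hcm2 : G.dist (ρ (m + (n - s))) x = G.dist x (ρ (m + (n - s))) := SimpleGraph.dist_comm
  omega

/-- Being on the far side of a child edge implies the far side of the parent edge. -/
lemma hc_child_sub (hT : G.IsTree) {x y z : V} (hxy : G.Adj x y) (hyz : G.Adj y z)
    (hzx : z ≠ x) (v : V) (h : G.dist v z < G.dist v y) : G.dist v y < G.dist v x := by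
  have h1 := hc_adj_dist hT hyz v
  have e1 : G.dist v y = G.dist v z + 1 := by rcases h1 with h1 | h1 <;> omega
  have h2 := hc_adj_dist hT hxy v
  rcases h2 with h2 | h2
  · omega
  · exfalso
    apply hzx
    refine hc_parent_unique hT (a := v) (v := y) (n := G.dist v y - 1) ?_ hyz.symm hxy ?_ ?_
    · omega
    · omega
    · omega

/-- Far sides of distinct child edges at `y` are incompatible. -/
lemma hc_child_disj (hT : G.IsTree) {y z z' : V} (hyz : G.Adj y z) (hyz' : G.Adj y z')
    (hne : z ≠ z') (v : V) (h : G.dist v z < G.dist v y) : G.dist v y < G.dist v z' := by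
  have h1 := hc_adj_dist hT hyz v
  have e1 : G.dist v y = G.dist v z + 1 := by rcases h1 with h1 | h1 <;> omega
  have h2 := hc_adj_dist hT hyz' v
  rcases h2 with h2 | h2
  · exfalso
    apply hne
    refine hc_parent_unique hT (a := v) (v := y) (n := G.dist v y - 1) ?_ hyz.symm hyz'.symm ?_ ?_
    · omega
    · omega
    · omega
  · omega

/-- A vertex strictly on the `y`-side of `xy`, other than `y`, is on the far side
of some child edge of `y`. -/
lemma hc_child_cover (hT : G.IsTree) {x y : V} (hxy : G.Adj x y) (v : V)
    (hv : G.dist v y < G.dist v x) (hvy : v ≠ y) :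
    ∃ z, G.Adj y z ∧ z ≠ x ∧ G.dist v z < G.dist v y := by
  obtain ⟨P, hP⟩ := hT.isConnected.exists_walk_length_eq_dist v y
  have hlen : 1 ≤ P.length := by
    rcases Nat.eq_zero_or_pos P.length with h | h
    · exfalso
      apply hvy
      have := hT.isConnected.dist_eq_zero_iff.mp (by omega : G.dist v y = 0)
      exact this
    · omega
  set z := P.getVert (P.length - 1) with hz
  have h1 := hc_geo_getVert hT.isConnected P hP (P.length - 1) (by omega)
  have hdz : G.dist v z = P.length - 1 := h1.1
  have hzy : G.dist z y = 1 := by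
    have h2 : G.dist z y = P.length - (P.length - 1) := h1.2
    omega
  have hadj : G.Adj y z := (SimpleGraph.dist_eq_one_iff_adj.mp hzy).symm
  have hvx : G.dist v x = G.dist v y + 1 := by
    rcases hc_adj_dist hT hxy v with h | h <;> omega
  refine ⟨z, hadj, ?_, by omega⟩
  intro hzx
  rw [hzx] at hdz
  omega

/-- `U(y,z) ⊆ U(x,y)` for a child edge. -/
lemma hc_Ue_child_sub (hT : G.IsTree) {x y z : V} (hxy : G.Adj x y) (hyz : G.Adj y z)
    (hzx : z ≠ x) : Ue G x₀ y z ⊆ Ue G x₀ x y := by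
  rintro ξ ⟨N, hN⟩
  exact ⟨N, fun n hn => hc_child_sub hT hxy hyz hzx _ (hN n hn)⟩

/-- Every ray on the `y`-side of `xy` is on the far side of a unique child edge. -/
lemma hc_Ue_split (hT : G.IsTree) [G.LocallyFinite] {x y : V} (hxy : G.Adj x y)
    {ξ : TreeRay G x₀} (hξ : ξ ∈ Ue G x₀ x y) :
    ∃ z, G.Adj y z ∧ z ≠ x ∧ ξ ∈ Ue G x₀ y z := by
  classical
  by_contra hcon
  push_neg at hcon
  set child := (G.neighborFinset y).erase x with hchild
  have hall : ∀ z ∈ child, ∃ N, ∀ n ≥ N, G.dist (ξ.toFun n) y < G.dist (ξ.toFun n) z := by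
    intro z hzc
    have hyz : G.Adj y z := by
      have := Finset.mem_of_mem_erase hzc
      exact (G.mem_neighborFinset y z).mp this
    have hzx : z ≠ x := Finset.ne_of_mem_erase hzc
    rcases hc_ray_side hT hyz ξ with h | h
    · exact absurd h (hcon z hyz hzx)
    · exact h
  choose Nf hNf using hall
  set Nsup := (child.attach).sup (fun z => Nf z.1 z.2) with hNsup
  obtain ⟨N₀, hN₀⟩ := hξ
  set n := max (max N₀ (G.dist x₀ y + 1)) Nsup with hn
  have hvy : ξ.toFun n ≠ y := by
    intro h
    have := ξ.isGeodesic n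
    rw [h] at this
    omega
  obtain ⟨z, hyz, hzx, hz⟩ := hc_child_cover hT hxy (ξ.toFun n)
    (hN₀ n (by omega)) hvy
  have hzc : z ∈ child := by
    rw [hchild, Finset.mem_erase, G.mem_neighborFinset]
    exact ⟨hzx, hyz⟩
  have hle : Nf z hzc ≤ Nsup := Finset.le_sup (f := fun z => Nf z.1 z.2)
    (Finset.mem_attach child ⟨z, hzc⟩)
  have := hNf z hzc n (by omega)
  omega

/-- The harmonic relation: `c(x,y)` is the sum of `c` over the child edges at `y`. -/
lemma hc_c_split [DecidableEq V] {M : Type*} [AddCommGroup M] [G.LocallyFinite] {x y : V} (hxy : G.Adj x y)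
    (c : V → V → M) (halt : ∀ x y : V, G.Adj x y → c x y = -c y x)
    (hharm : ∀ v : V, ∑ u ∈ G.neighborFinset v, c u v = 0) :
    c x y = ∑ z ∈ (G.neighborFinset y).erase x, c y z := by
  classical
  have hx : x ∈ G.neighborFinset y := (G.mem_neighborFinset y x).mpr hxy.symm
  have h0 := hharm y
  rw [← Finset.add_sum_erase _ _ hx] at h0
  have h1 : ∑ z ∈ (G.neighborFinset y).erase x, c y z
      = - ∑ z ∈ (G.neighborFinset y).erase x, c z y := by
    rw [← Finset.sum_neg_distrib]
    refine Finset.sum_congr rfl ?_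
    intro z hz
    have hyz : G.Adj y z := (G.mem_neighborFinset y z).mp (Finset.mem_of_mem_erase hz)
    exact halt y z hyz
  rw [h1]
  have := add_eq_zero_iff_eq_neg.mp h0
  exact this

/-- Direction lemma: if two edges have the same shadow, one head is on the
far side of the other edge. -/
lemma hc_dir (hT : G.IsTree) [G.LocallyFinite] (hends : NoEnds G) {x y x' y' : V}
    (hxy : G.Adj x y) (hx'y' : G.Adj x' y') (heq : Ue G x₀ x y = Ue G x₀ x' y') :
    G.dist y' y < G.dist y' x ∨ G.dist y y' < G.dist y x' := by
  by_contra hcon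
  push_neg at hcon
  obtain ⟨hc1, hc2⟩ := hcon
  have hy' : G.dist y' x < G.dist y' y := by
    rcases hc_adj_dist hT hxy y' with h | h <;> omega
  have hy : G.dist y x' < G.dist y y' := by
    rcases hc_adj_dist hT hx'y' y with h | h <;> omega
  obtain ⟨ξ, hξ⟩ := hc_Ue_nonempty (x₀ := x₀) hT hends hxy
  have hξ' : ξ ∈ Ue G x₀ x' y' := heq ▸ hξ
  obtain ⟨N1, hN1⟩ := hξ
  obtain ⟨N2, hN2⟩ := hξ'
  set n := max N1 N2 with hn
  have hv1 := hN1 n (by omega)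
  have hv2 := hN2 n (by omega)
  have e1 := hc_dist_cross hT hxy hv1 hy'
  have e2 := hc_dist_cross hT hx'y' hv2 hy
  have c1 : G.dist x y' = G.dist y' x := SimpleGraph.dist_comm
  have c2 : G.dist x' y = G.dist y x' := SimpleGraph.dist_comm
  have c3 : G.dist (ξ.toFun n) y' = G.dist y' (ξ.toFun n) := SimpleGraph.dist_comm
  have c4 : G.dist (ξ.toFun n) y = G.dist y (ξ.toFun n) := SimpleGraph.dist_comm
  omega

/-- Two edges with the same head and the same shadow are equal. -/
lemma hc_shadow_same (hT : G.IsTree) [G.LocallyFinite] (hends : NoEnds G) {x x' y : V}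
    (hxy : G.Adj x y) (hx'y : G.Adj x' y)
    (heq : Ue G x₀ x y = Ue G x₀ x' y) : x = x' := by
  by_contra hne
  obtain ⟨ρ, hρ⟩ := hc_Ue_nonempty (x₀ := x₀) hT hends hxy.symm
  have hρ' : ρ ∈ Ue G x₀ x' y := by
    obtain ⟨N, hN⟩ := hρ
    refine ⟨N, fun n hn => ?_⟩
    have hv := hN n hn
    rcases hc_adj_dist hT hx'y (ρ.toFun n) with h | h
    · omega
    · exfalso
      apply hne
      have e1 : G.dist (ρ.toFun n) x = G.dist (ρ.toFun n) y - 1 := by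
        rcases hc_adj_dist hT hxy (ρ.toFun n) with h' | h' <;> omega
      exact hc_parent_unique hT (a := ρ.toFun n) (v := y) (n := G.dist (ρ.toFun n) y - 1)
        (by omega) hxy hx'y (by omega) (by omega)
  rw [← heq] at hρ'
  exact hc_Ue_disjoint ρ hρ' hρ

/-- Edges with equal shadows have equal cocycle values. -/
lemma hc_shadow_eq (hT : G.IsTree) [G.LocallyFinite] [DecidableEq V] (hends : NoEnds G)
    {M : Type*} [AddCommGroup M]
    (c : V → V → M) (halt : ∀ x y : V, G.Adj x y → c x y = -c y x)
    (hharm : ∀ v : V, ∑ u ∈ G.neighborFinset v, c u v = 0) :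
    ∀ d : ℕ, ∀ x y x' y' : V, G.Adj x y → G.Adj x' y' →
      Ue G x₀ x y = Ue G x₀ x' y' → G.dist y y' ≤ d → c x y = c x' y' := by
  intro d
  induction d with
  | zero =>
    intro x y x' y' hxy hx'y' heq hd
    have hyy : y = y' := hT.isConnected.dist_eq_zero_iff.mp (by omega)
    subst hyy
    rw [hc_shadow_same hT hends hxy hx'y' heq]
  | succ d ihd =>
    intro x y x' y' hxy hx'y' heq hd
    by_cases hyy : y = y'
    · subst hyy
      rw [hc_shadow_same hT hends hxy hx'y' heq]
    · have key : ∀ x y x' y' : V, G.Adj x y → G.Adj x' y' →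
          Ue G x₀ x y = Ue G x₀ x' y' → G.dist y y' ≤ d + 1 → y ≠ y' →
          G.dist y' y < G.dist y' x → c x y = c x' y' := by
        clear hxy hx'y' heq hd hyy x y x' y'
        intro x y x' y' hxy hx'y' heq hdle hyne hfront
        set d' := G.dist y y' with hd'
        have hd'pos : 1 ≤ d' := by
          have := hT.isConnected.pos_dist_of_ne hyne
          omega
        obtain ⟨P, hP⟩ := hT.isConnected.exists_walk_length_eq_dist y y'
        have hg1 := hc_geo_getVert hT.isConnected P hP 1 (by omega)
        set z := P.getVert 1 with hz
        have hyz : G.Adj y z := by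
          have := P.adj_getVert_succ (i := 0) (by omega)
          rwa [SimpleGraph.Walk.getVert_zero] at this
        have hzy' : G.dist z y' = P.length - 1 := hg1.2
        have hcomm : G.dist y' y = d' := SimpleGraph.dist_comm
        have hy'x : G.dist y' x = d' + 1 := by
          rcases hc_adj_dist hT hxy y' with h | h <;> omega
        have hzx : z ≠ x := by
          intro h
          rw [h] at hzy'
          have hc2 : G.dist x y' = G.dist y' x := SimpleGraph.dist_comm
          omega
        -- Step A : x' lies towards y
        have hyx' : G.dist y x' = d' - 1 := by
          rcases hc_adj_dist hT hx'y' y with hA | hA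
          · exfalso
            obtain ⟨ρ, hρ⟩ := hc_Ue_nonempty (x₀ := x₀) hT hends hxy.symm
            have hρ' : ρ ∈ Ue G x₀ x' y' := by
              obtain ⟨N, hN⟩ := hρ
              refine ⟨N, fun n hn => ?_⟩
              have hvx : G.dist (ρ.toFun n) x < G.dist (ρ.toFun n) y := hN n hn
              by_contra hcon
              have hvx' : G.dist (ρ.toFun n) x' < G.dist (ρ.toFun n) y' := by
                rcases hc_adj_dist hT hx'y' (ρ.toFun n) with h | h <;> omega
              have hyy' : G.dist y y' < G.dist y x' := by omega
              have e1 := hc_dist_cross hT hx'y' (a := y) (b := ρ.toFun n) hyy' hvx'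
              have e2 := hc_dist_cross hT hxy (a := y') (b := ρ.toFun n) hfront hvx
              have c1 : G.dist y (ρ.toFun n) = G.dist (ρ.toFun n) y := SimpleGraph.dist_comm
              have c2 : G.dist x' (ρ.toFun n) = G.dist (ρ.toFun n) x' := SimpleGraph.dist_comm
              have c3 : G.dist y' (ρ.toFun n) = G.dist (ρ.toFun n) y' := SimpleGraph.dist_comm
              have c4 : G.dist x (ρ.toFun n) = G.dist (ρ.toFun n) x := SimpleGraph.dist_comm
              have e3 : G.dist (ρ.toFun n) x' + 1 = G.dist (ρ.toFun n) y' := by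
                rcases hc_adj_dist hT hx'y' (ρ.toFun n) with h | h <;> omega
              have e4 : G.dist (ρ.toFun n) x + 1 = G.dist (ρ.toFun n) y := by
                rcases hc_adj_dist hT hxy (ρ.toFun n) with h | h <;> omega
              omega
            rw [← heq] at hρ'
            exact hc_Ue_disjoint ρ hρ' hρ
          · omega
        -- Step B : z is the unique child of y
        have hchild : ∀ w, G.Adj y w → w ≠ x → w = z := by
          intro w hyw hwx
          by_contra hwz
          obtain ⟨σ, hσ⟩ := hc_Ue_nonempty (x₀ := x₀) hT hends hyw
          have hσ1 : σ ∈ Ue G x₀ x y := hc_Ue_child_sub hT hxy hyw hwx hσ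
          have hσ2 : σ ∈ Ue G x₀ x' y' := heq ▸ hσ1
          obtain ⟨N1, hN1⟩ := hσ
          obtain ⟨N2, hN2⟩ := hσ2
          have hv1 : G.dist (σ.toFun (max N1 N2)) w < G.dist (σ.toFun (max N1 N2)) y :=
            hN1 _ (le_max_left _ _)
          have hv2 : G.dist (σ.toFun (max N1 N2)) y' < G.dist (σ.toFun (max N1 N2)) x' :=
            hN2 _ (le_max_right _ _)
          have hy'w : G.dist y' y < G.dist y' w := by
            rcases hc_adj_dist hT hyw y' with h | h
            · exfalso
              apply hwz
              refine hc_parent_unique hT (a := y') (v := y) (n := d' - 1)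
                (by omega) hyw.symm hyz.symm ?_ ?_
              · omega
              · have hc3 : G.dist y' z = G.dist z y' := SimpleGraph.dist_comm
                omega
            · omega
          have e1 := hc_dist_cross hT hyw (a := σ.toFun (max N1 N2)) (b := y') hv1 hy'w
          have e2 : G.dist (σ.toFun (max N1 N2)) x' ≤
              G.dist (σ.toFun (max N1 N2)) y + G.dist y x' := hT.isConnected.dist_triangle
          have e3 : G.dist (σ.toFun (max N1 N2)) y = G.dist (σ.toFun (max N1 N2)) w + 1 := by
            rcases hc_adj_dist hT hyw (σ.toFun (max N1 N2)) with h | h <;> omega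
          omega
        -- Step C : pass to the child edge
        have hUeq : Ue G x₀ x y = Ue G x₀ y z := by
          apply Set.ext
          intro ξ
          constructor
          · intro hξ
            obtain ⟨w, hyw, hwx, hw⟩ := hc_Ue_split hT hxy hξ
            rwa [hchild w hyw hwx] at hw
          · intro hξ
            exact hc_Ue_child_sub hT hxy hyz hzx hξ
        have hceq : c x y = c y z := by
          rw [hc_c_split hxy c halt hharm]
          have hsingle : (G.neighborFinset y).erase x = {z} := by
            apply Finset.ext
            intro w
            simp only [Finset.mem_erase, Finset.mem_singleton, SimpleGraph.mem_neighborFinset]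
            constructor
            · rintro ⟨hwx, hyw⟩
              exact hchild w hyw hwx
            · rintro rfl
              exact ⟨hzx, hyz⟩
          rw [hsingle, Finset.sum_singleton]
        rw [hceq]
        exact ihd y z x' y' hyz hx'y' (hUeq.symm.trans heq) (by omega)
      rcases hc_dir hT hends hxy hx'y' heq with h | h
      · exact key x y x' y' hxy hx'y' heq hd hyy h
      · have hd2 : G.dist y' y ≤ d + 1 := by
          have : G.dist y' y = G.dist y y' := SimpleGraph.dist_comm
          omega
        exact (key x' y' x y hx'y' hxy heq.symm hd2 (Ne.symm hyy) h).symm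

/-- Nesting: if the endpoints of `xy` are on the far side of `ab` and the shadow of `ab`
is contained in that of `xy`, then the shadows agree. -/
lemma hc_nest (hT : G.IsTree) [G.LocallyFinite] (hends : NoEnds G) {x y a b : V}
    (hxy : G.Adj x y) (hab : G.Adj a b)
    (hyb : G.dist y b < G.dist y a) (hxb : G.dist x b < G.dist x a)
    (hsub : Ue G x₀ a b ⊆ Ue G x₀ x y) : Ue G x₀ x y ⊆ Ue G x₀ a b := by
  have hpt : ∀ v, G.dist v y < G.dist v x → G.dist v b < G.dist v a := by
    intro v hvy
    by_contra hcon
    have hva : G.dist v a < G.dist v b := by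
      rcases hc_adj_dist hT hab v with h | h <;> omega
    -- Step 1 : a is on the y-side of (x,y)
    have hay : G.dist a y < G.dist a x := by
      obtain ⟨q, hq, hql⟩ := hT.isConnected.exists_path_of_dist v y
      obtain ⟨i, hi, hga, hgb⟩ := hc_walk_crossing hT hab q hva hyb
      have hyy : G.dist y y < G.dist y x := by
        rw [SimpleGraph.dist_self]
        have : G.dist y x = 1 := SimpleGraph.dist_eq_one_iff_adj.mpr hxy.symm
        omega
      have := hc_path_side hT hxy q hq hvy hyy (q.getVert i)
        (SimpleGraph.Walk.mem_support_iff_exists_getVert.mpr ⟨i, rfl, by omega⟩)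
      rwa [hga] at this
    -- Step 2 : every vertex on the x-side of (x,y) is on the b-side of (a,b)
    have hstep2 : ∀ w, G.dist w x < G.dist w y → G.dist w b < G.dist w a := by
      intro w hw
      by_contra hcon2
      have hwa : G.dist w a < G.dist w b := by
        rcases hc_adj_dist hT hab w with h | h <;> omega
      obtain ⟨q, hq, hql⟩ := hT.isConnected.exists_path_of_dist w a
      have haa : G.dist a a < G.dist a b := by
        rw [SimpleGraph.dist_self]
        have : G.dist a b = 1 := SimpleGraph.dist_eq_one_iff_adj.mpr hab
        omega
      obtain ⟨j, hj, hgx, hgy⟩ := hc_walk_crossing hT hxy q hw hay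
      have := hc_path_side hT hab.symm q hq hwa haa (q.getVert (j + 1))
        (SimpleGraph.Walk.mem_support_iff_exists_getVert.mpr ⟨j + 1, rfl, by omega⟩)
      rw [hgy] at this
      omega
    -- Step 3 : a ray on the x-side would be in both shadows
    obtain ⟨ρ, hρ⟩ := hc_Ue_nonempty (x₀ := x₀) hT hends hxy.symm
    have hρab : ρ ∈ Ue G x₀ a b := by
      obtain ⟨N, hN⟩ := hρ
      exact ⟨N, fun n hn => hstep2 _ (hN n hn)⟩
    exact hc_Ue_disjoint ρ (hsub hρab) hρ
  rintro ξ ⟨N, hN⟩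
  exact ⟨N, fun n hn => hpt _ (hN n hn)⟩

/-- Classification: rays of a shadow properly inside `U(x,y)` all lie on the far side
of the same child edge of `y`. -/
lemma hc_classify (hT : G.IsTree) [G.LocallyFinite] (hends : NoEnds G) {x y a b z z' : V}
    (hxy : G.Adj x y) (hab : G.Adj a b)
    (hsub : Ue G x₀ a b ⊆ Ue G x₀ x y) (hnotall : ¬ (Ue G x₀ x y ⊆ Ue G x₀ a b))
    (hyz : G.Adj y z) (hzx : z ≠ x) (hyz' : G.Adj y z') (hz'x : z' ≠ x)
    {ζ ζ' : TreeRay G x₀} (hζab : ζ ∈ Ue G x₀ a b) (hζ'ab : ζ' ∈ Ue G x₀ a b)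
    (hζ : ζ ∈ Ue G x₀ y z) (hζ' : ζ' ∈ Ue G x₀ y z') : z = z' := by
  by_contra hne
  obtain ⟨N1, h1⟩ := hζab
  obtain ⟨N2, h2⟩ := hζ
  obtain ⟨N3, h3⟩ := hζ'ab
  obtain ⟨N4, h4⟩ := hζ'
  have hv1 : G.dist (ζ.toFun (max N1 N2)) b < G.dist (ζ.toFun (max N1 N2)) a :=
    h1 _ (le_max_left _ _)
  have hv2 : G.dist (ζ.toFun (max N1 N2)) z < G.dist (ζ.toFun (max N1 N2)) y :=
    h2 _ (le_max_right _ _)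
  have hv3 : G.dist (ζ'.toFun (max N3 N4)) b < G.dist (ζ'.toFun (max N3 N4)) a :=
    h3 _ (le_max_left _ _)
  have hv4 : G.dist (ζ'.toFun (max N3 N4)) z' < G.dist (ζ'.toFun (max N3 N4)) y :=
    h4 _ (le_max_right _ _)
  have hv4' : G.dist (ζ'.toFun (max N3 N4)) y < G.dist (ζ'.toFun (max N3 N4)) z :=
    hc_child_disj hT hyz' hyz (Ne.symm hne) _ hv4
  obtain ⟨q, hq, hql⟩ := hT.isConnected.exists_path_of_dist
    (ζ.toFun (max N1 N2)) (ζ'.toFun (max N3 N4))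
  -- crossing of the edge (z,y) : from the z-side to the y-side
  obtain ⟨j, hj, hgz, hgy⟩ := hc_walk_crossing hT hyz.symm q hv2 hv4'
  -- the whole path is on the b-side of (a,b)
  have hyb : G.dist y b < G.dist y a := by
    have := hc_path_side hT hab q hq hv1 hv3 (q.getVert (j + 1))
      (SimpleGraph.Walk.mem_support_iff_exists_getVert.mpr ⟨j + 1, rfl, by omega⟩)
    rwa [hgy] at this
  have hxb : G.dist x b < G.dist x a := by
    by_contra hcon
    have hxa : G.dist x a < G.dist x b := by
      rcases hc_adj_dist hT hab x with h | h <;> omega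
    obtain ⟨hyb', hxa'⟩ := hc_crossing_eq hT hab hxy.symm hyb hxa
    apply hnotall
    rw [← hyb', ← hxa']
  exact hnotall (hc_nest hT hends hxy hab hyb hxb hsub)

/-- Main additivity statement, part 1. -/
lemma hc_main1 (hT : G.IsTree) [G.LocallyFinite] [DecidableEq V] (hends : NoEnds G)
    {M : Type*} [AddCommGroup M]
    (c : V → V → M) (halt : ∀ x y : V, G.Adj x y → c x y = -c y x)
    (hharm : ∀ v : V, ∑ u ∈ G.neighborFinset v, c u v = 0) :
    ∀ n : ℕ, ∀ x y : V, G.Adj x y → ∀ p : Fin n → V × V,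
      (∀ i, G.Adj (p i).1 (p i).2) →
      (Pairwise fun i j => Disjoint (Ue G x₀ (p i).1 (p i).2) (Ue G x₀ (p j).1 (p j).2)) →
      Ue G x₀ x y = ⋃ i, Ue G x₀ (p i).1 (p i).2 →
      c x y = ∑ i, c (p i).1 (p i).2 := by
  intro n
  induction n using Nat.strong_induction_on with
  | _ n ihn =>
  intro x y hxy p hadj hdisj hun
  rcases Nat.lt_or_ge n 2 with hn2 | hn2
  · interval_cases n
    · -- n = 0
      exfalso
      obtain ⟨ξ, hξ⟩ := hc_Ue_nonempty (x₀ := x₀) hT hends hxy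
      rw [hun] at hξ
      obtain ⟨i, -⟩ := Set.mem_iUnion.mp hξ
      exact i.elim0
    · -- n = 1
      rw [Fin.sum_univ_one]
      have hun1 : Ue G x₀ x y = Ue G x₀ (p 0).1 (p 0).2 := by
        rw [hun]
        apply Set.ext
        intro ξ
        rw [Set.mem_iUnion]
        constructor
        · rintro ⟨i, hi⟩
          rwa [Fin.fin_one_eq_zero i] at hi
        · intro h
          exact ⟨0, h⟩
      exact hc_shadow_eq hT hends c halt hharm (G.dist y (p 0).2) x y (p 0).1 (p 0).2
        hxy (hadj 0) hun1 le_rfl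
  · -- n ≥ 2
    have hi01 : (⟨0, by omega⟩ : Fin n) ≠ ⟨1, by omega⟩ := by
      intro h
      rw [Fin.mk.injEq] at h
      omega
    set i₀ : Fin n := ⟨0, by omega⟩ with hi₀
    set i₁ : Fin n := ⟨1, by omega⟩ with hi₁
    have hrep : ∀ i, ∃ ζ : TreeRay G x₀, ζ ∈ Ue G x₀ (p i).1 (p i).2 :=
      fun i => hc_Ue_nonempty hT hends (hadj i)
    choose ζ hζ using hrep
    have hξη : ζ i₀ ≠ ζ i₁ := by
      intro h
      exact Set.disjoint_left.mp (hdisj hi01) (hζ i₀) (h ▸ hζ i₁)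
    obtain ⟨J, hJa, hJside⟩ := hc_exists_div hT hξη
    have inner : ∀ d : ℕ, ∀ x y : V, G.Adj x y →
        Ue G x₀ x y = ⋃ i, Ue G x₀ (p i).1 (p i).2 →
        G.dist ((ζ i₀).toFun J) y ≤ d → c x y = ∑ i, c (p i).1 (p i).2 := by
      intro d
      induction d using Nat.strong_induction_on with
      | _ d ihd =>
      intro x y hxy hun hbd
      have hsub : ∀ i, Ue G x₀ (p i).1 (p i).2 ⊆ Ue G x₀ x y := by
        intro i
        rw [hun]
        exact Set.subset_iUnion (fun i => Ue G x₀ (p i).1 (p i).2) i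
      have hnotall : ∀ i, ¬ (Ue G x₀ x y ⊆ Ue G x₀ (p i).1 (p i).2) := by
        intro i hcon
        by_cases hii : i = i₀
        · obtain ⟨σ, hσ⟩ := hc_Ue_nonempty (x₀ := x₀) hT hends (hadj i₁)
          have h1 : σ ∈ Ue G x₀ (p i).1 (p i).2 := hcon (hsub i₁ hσ)
          exact Set.disjoint_left.mp (hdisj (by rw [hii]; exact hi01)) h1 hσ
        · obtain ⟨σ, hσ⟩ := hc_Ue_nonempty (x₀ := x₀) hT hends (hadj i₀)
          have h1 : σ ∈ Ue G x₀ (p i).1 (p i).2 := hcon (hsub i₀ hσ)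
          exact Set.disjoint_left.mp (hdisj hii) h1 hσ
      -- each set of the family sits inside a unique child shadow
      have hchild : ∀ i, ∃ z, G.Adj y z ∧ z ≠ x ∧ ζ i ∈ Ue G x₀ y z :=
        fun i => hc_Ue_split hT hxy (hsub i (hζ i))
      choose z hz1 hz2 hz3 using hchild
      have hcls : ∀ i, ∀ ξ' ∈ Ue G x₀ (p i).1 (p i).2, ξ' ∈ Ue G x₀ y (z i) := by
        intro i ξ' hξ'
        obtain ⟨w, hw1, hw2, hw3⟩ := hc_Ue_split hT hxy (hsub i hξ')
        have : w = z i := hc_classify hT hends hxy (hadj i) (hsub i) (hnotall i)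
          hw1 hw2 (hz1 i) (hz2 i) hξ' (hζ i) hw3 (hz3 i)
        rwa [this] at hw3
      by_cases hallz : ∀ i, z i = z i₀
      · -- chain case : only one child is used, and it is the unique child
        have huniq : ∀ w, G.Adj y w → w ≠ x → w = z i₀ := by
          intro w hyw hwx
          by_contra hwz
          obtain ⟨σ, hσ⟩ := hc_Ue_nonempty (x₀ := x₀) hT hends hyw
          have hσ1 : σ ∈ Ue G x₀ x y := hc_Ue_child_sub hT hxy hyw hwx hσ
          rw [hun] at hσ1
          obtain ⟨i, hi⟩ := Set.mem_iUnion.mp hσ1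
          have hσ2 : σ ∈ Ue G x₀ y (z i) := hcls i σ hi
          rw [hallz i] at hσ2
          obtain ⟨N1, hN1⟩ := hσ
          obtain ⟨N2, hN2⟩ := hσ2
          have h1 := hN1 (max N1 N2) (le_max_left _ _)
          have h2 := hN2 (max N1 N2) (le_max_right _ _)
          have := hc_child_disj hT hyw (hz1 i₀) hwz _ h1
          omega
        have hUeq : Ue G x₀ x y = Ue G x₀ y (z i₀) := by
          apply Set.ext
          intro σ
          constructor
          · intro hσ
            obtain ⟨w, hw1, hw2, hw3⟩ := hc_Ue_split hT hxy hσ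
            rwa [huniq w hw1 hw2] at hw3
          · intro hσ
            exact hc_Ue_child_sub hT hxy (hz1 i₀) (hz2 i₀) hσ
        have hceq : c x y = c y (z i₀) := by
          rw [hc_c_split hxy c halt hharm]
          have hsingle : (G.neighborFinset y).erase x = {z i₀} := by
            apply Finset.ext
            intro w
            simp only [Finset.mem_erase, Finset.mem_singleton, SimpleGraph.mem_neighborFinset]
            constructor
            · rintro ⟨hwx, hyw⟩
              exact huniq w hyw hwx
            · rintro rfl
              exact ⟨hz2 i₀, hz1 i₀⟩
          rw [hsingle, Finset.sum_singleton]
        have hζ1' : ζ i₁ ∈ Ue G x₀ y (z i₀) := by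
          have := hcls i₁ _ (hζ i₁)
          rwa [hallz i₁] at this
        have hbside := hJside y (z i₀) (hz1 i₀) (hz3 i₀) hζ1'
        rw [hceq]
        exact ihd (d - 1) (by omega) y (z i₀) (hz1 i₀) (hUeq.symm.trans hun) (by omega)
      · -- fiber case : at least two children are used
        push_neg at hallz
        obtain ⟨i₂, hi₂⟩ := hallz
        have hmap : ∀ i : Fin n, i ∈ Finset.univ → z i ∈ (G.neighborFinset y).erase x := by
          intro i _
          rw [Finset.mem_erase, SimpleGraph.mem_neighborFinset]
          exact ⟨hz2 i, hz1 i⟩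
        rw [hc_c_split hxy c halt hharm,
          ← Finset.sum_fiberwise_of_maps_to hmap (fun i => c (p i).1 (p i).2)]
        apply Finset.sum_congr rfl
        intro w hw
        rw [Finset.mem_erase, SimpleGraph.mem_neighborFinset] at hw
        obtain ⟨hwx, hyw⟩ := hw
        set Iw := Finset.univ.filter (fun i => z i = w) with hIw
        -- the fiber over w is nonempty
        have hfeq : ∀ {σ : TreeRay G x₀} {i : Fin n}, σ ∈ Ue G x₀ y w →
            σ ∈ Ue G x₀ (p i).1 (p i).2 → z i = w := by
          intro σ i hσw hσi
          by_contra hzz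
          have hσ2 : σ ∈ Ue G x₀ y (z i) := hcls i σ hσi
          obtain ⟨N1, hN1⟩ := hσw
          obtain ⟨N2, hN2⟩ := hσ2
          have h1 := hN1 (max N1 N2) (le_max_left _ _)
          have h2 := hN2 (max N1 N2) (le_max_right _ _)
          have := hc_child_disj hT hyw (hz1 i) (fun hc => hzz hc.symm) _ h1
          omega
        have hne : Iw.Nonempty := by
          obtain ⟨σ, hσ⟩ := hc_Ue_nonempty (x₀ := x₀) hT hends hyw
          have hσ1 : σ ∈ Ue G x₀ x y := hc_Ue_child_sub hT hxy hyw hwx hσ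
          rw [hun] at hσ1
          obtain ⟨i, hi⟩ := Set.mem_iUnion.mp hσ1
          exact ⟨i, by rw [hIw, Finset.mem_filter]; exact ⟨Finset.mem_univ i, hfeq hσ hi⟩⟩
        have hlt : Iw.card < n := by
          have hnotuniv : Iw ≠ Finset.univ := by
            intro hcon
            by_cases hwz : w = z i₀
            · have : i₂ ∈ Iw := by rw [hcon]; exact Finset.mem_univ i₂
              rw [hIw, Finset.mem_filter] at this
              exact hi₂ (by rw [this.2, hwz])
            · have : i₀ ∈ Iw := by rw [hcon]; exact Finset.mem_univ i₀
              rw [hIw, Finset.mem_filter] at this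
              exact hwz this.2.symm
          have := Finset.card_lt_card (Finset.ssubset_univ_iff.mpr hnotuniv)
          rwa [Finset.card_univ, Fintype.card_fin] at this
        -- reindex the fiber by Fin (Iw.card)
        set e := Iw.equivFin.symm with he
        set q : Fin Iw.card → V × V := fun k => p (e k).1 with hq
        have hq_adj : ∀ k, G.Adj (q k).1 (q k).2 := fun k => hadj _
        have hq_disj : Pairwise fun k k' =>
            Disjoint (Ue G x₀ (q k).1 (q k).2) (Ue G x₀ (q k').1 (q k').2) := by
          intro k k' hkk'
          exact hdisj (fun hc => hkk' (e.injective (Subtype.ext hc)))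
        have hq_un : Ue G x₀ y w = ⋃ k, Ue G x₀ (q k).1 (q k).2 := by
          apply Set.ext
          intro σ
          constructor
          · intro hσ
            have hσ1 : σ ∈ Ue G x₀ x y := hc_Ue_child_sub hT hxy hyw hwx hσ
            rw [hun] at hσ1
            obtain ⟨i, hi⟩ := Set.mem_iUnion.mp hσ1
            have hiw : i ∈ Iw := by
              rw [hIw, Finset.mem_filter]
              exact ⟨Finset.mem_univ i, hfeq hσ hi⟩
            refine Set.mem_iUnion.mpr ⟨e.symm ⟨i, hiw⟩, ?_⟩
            show σ ∈ Ue G x₀ (p (e (e.symm ⟨i, hiw⟩)).1).1 (p (e (e.symm ⟨i, hiw⟩)).1).2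
            rw [Equiv.apply_symm_apply]
            exact hi
          · intro hσ
            obtain ⟨k, hk⟩ := Set.mem_iUnion.mp hσ
            have h1 : σ ∈ Ue G x₀ y (z (e k).1) := hcls (e k).1 σ hk
            have h2 : z (e k).1 = w := by
              have := (e k).2
              exact (Finset.mem_filter.mp this).2
            rwa [h2] at h1
        have hrec := ihn Iw.card hlt y w hyw q hq_adj hq_disj hq_un
        rw [hrec]
        rw [← Finset.sum_attach Iw (fun i => c (p i).1 (p i).2), ← Finset.univ_eq_attach]
        exact Equiv.sum_comp e (fun s => c (p s.1).1 (p s.1).2)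
    exact inner (G.dist ((ζ i₀).toFun J) y) x y hxy hun le_rfl

end HCProof

/-- Let `c` assign to each oriented edge of a locally finite tree without ends a value
in a `K`-vector space `M`, with `c(e) = −c(ē)` and `∑_{e ↦ v} c(e) = 0` at every vertex
(a harmonic cocycle). Then the finitely additive set function `μ_c` on the compact opens
of `∂T` determined by `μ_c(U(e)) = c(e)` is well defined — whenever `U(e)` is a finite
disjoint union of sets `U(eᵢ)`, one has `c(e) = ∑ c(eᵢ)` — and `μ_c(∂T) = 0`: whenever
`∂T` is a finite disjoint union of sets `U(eᵢ)`, one has `∑ c(eᵢ) = 0`. -/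
theorem harmonic_cocycle_distribution_well_defined {V : Type*} (G : SimpleGraph V)
    (hT : G.IsTree) [G.LocallyFinite] (hends : NoEnds G) (x₀ : V)
    (K : Type*) [Field K] (M : Type*) [AddCommGroup M] [Module K M]
    (c : V → V → M)
    (halt : ∀ x y : V, G.Adj x y → c x y = -c y x)
    (hharm : ∀ v : V, ∑ u ∈ G.neighborFinset v, c u v = 0) :
    (∀ x y : V, G.Adj x y → ∀ (n : ℕ) (p : Fin n → V × V),
      (∀ i, G.Adj (p i).1 (p i).2) →
      (Pairwise fun i j => Disjoint (Ue G x₀ (p i).1 (p i).2) (Ue G x₀ (p j).1 (p j).2)) →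
      Ue G x₀ x y = ⋃ i, Ue G x₀ (p i).1 (p i).2 →
      c x y = ∑ i, c (p i).1 (p i).2) ∧
    (∀ (n : ℕ) (p : Fin n → V × V),
      (∀ i, G.Adj (p i).1 (p i).2) →
      (Pairwise fun i j => Disjoint (Ue G x₀ (p i).1 (p i).2) (Ue G x₀ (p j).1 (p j).2)) →
      (Set.univ : Set (TreeRay G x₀)) = ⋃ i, Ue G x₀ (p i).1 (p i).2 →
      ∑ i, c (p i).1 (p i).2 = 0) := by
  classical
  constructor
  · intro x y hxy n p hadj hdisj hun
    exact hc_main1 hT hends c halt hharm n x y hxy p hadj hdisj hun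
  · intro n p hadj hdisj hun
    have hy₀ : ∃ y₀, G.Adj x₀ y₀ := by
      have hdeg := hends x₀
      have hpos : 0 < (G.neighborFinset x₀).card := by
        rw [G.card_neighborFinset_eq_degree]
        omega
      obtain ⟨y₀, hy⟩ := Finset.card_pos.mp hpos
      exact ⟨y₀, (G.mem_neighborFinset x₀ y₀).mp hy⟩
    obtain ⟨y₀, hy₀⟩ := hy₀
    cases n with
    | zero =>
      exfalso
      obtain ⟨ξ, -⟩ := hc_Ue_nonempty (x₀ := x₀) hT hends hy₀
      have hξ : ξ ∈ (Set.univ : Set (TreeRay G x₀)) := Set.mem_univ ξ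
      rw [hun] at hξ
      obtain ⟨i, -⟩ := Set.mem_iUnion.mp hξ
      exact i.elim0
    | succ m =>
      have hab : G.Adj (p 0).1 (p 0).2 := hadj 0
      set q : Fin m → V × V := fun k => p k.succ with hq
      have hq_adj : ∀ k, G.Adj (q k).1 (q k).2 := fun k => hadj _
      have hq_disj : Pairwise fun k k' =>
          Disjoint (Ue G x₀ (q k).1 (q k).2) (Ue G x₀ (q k').1 (q k').2) := by
        intro k k' hkk'
        exact hdisj (fun hc => hkk' (Fin.succ_injective m hc))
      have hq_un : Ue G x₀ (p 0).2 (p 0).1 = ⋃ k, Ue G x₀ (q k).1 (q k).2 := by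
        apply Set.ext
        intro σ
        constructor
        · intro hσ
          have hσu : σ ∈ (Set.univ : Set (TreeRay G x₀)) := Set.mem_univ σ
          rw [hun] at hσu
          obtain ⟨i, hi⟩ := Set.mem_iUnion.mp hσu
          by_cases hi0 : i = 0
          · exfalso
            rw [hi0] at hi
            exact hc_Ue_disjoint σ hi hσ
          · obtain ⟨k, hk⟩ := Fin.exists_succ_eq_of_ne_zero hi0
            refine Set.mem_iUnion.mpr ⟨k, ?_⟩
            show σ ∈ Ue G x₀ (p k.succ).1 (p k.succ).2
            rw [hk]
            exact hi
        · intro hσ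
          obtain ⟨k, hk⟩ := Set.mem_iUnion.mp hσ
          have hnot : σ ∉ Ue G x₀ (p 0).1 (p 0).2 := by
            intro hcon
            exact Set.disjoint_left.mp (hdisj (Fin.succ_ne_zero k)) hk hcon
          rcases hc_ray_side hT hab σ with h | h
          · exact absurd h hnot
          · exact h
      have h1 := hc_main1 hT hends c halt hharm m (p 0).2 (p 0).1 hab.symm
        q hq_adj hq_disj hq_un
      rw [Fin.sum_univ_succ, ← h1, halt (p 0).1 (p 0).2 hab]
      exact neg_add_cancel _
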